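/- Let f ∈ S_k(SL₂(ℤ)) be a normalized Hecke eigenform, and let g₁, ..., g_{d₂} be the normalized Hecke eigenbasis of S_{2k}. If the stabilizer of f² in Gal(F₁F₂/ℚ) acts transitively on {g₁, ..., g_{d₂}}, then the Petersson inner product ⟨f², g_i⟩ ≠ 0 for every 1 ≤ i ≤ d₂. -/

import Mathlib

set_option maxHeartbeats 2000000
set_option synthInstance.maxHeartbeats 400000


open UpperHalfPlane CongruenceSubgroup

/-- `F` is a normalized Hecke eigenform of weight `k` for `SL₂(ℤ)` with Fourier
coefficients `a`: its `q`-expansion is given by `a`, it is normalized (`a₁ = 1`), and its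
coefficients satisfy the Hecke multiplicativity relations
`a_m a_n = ∑_{d ∣ (m,n)} d^{k−1} a_{mn/d²}` (equivalently, `F` is a simultaneous
eigenform for all Hecke operators, normalized). -/
structure IsNormalizedEigenform (k : ℤ) (F : CuspForm (Gamma 1) k) (a : ℕ → ℂ) : Prop where
  fourier : ∀ z : ℍ, F z = ∑' n : ℕ, a n * Complex.exp (2 * Real.pi * Complex.I * n * z)
  normalized : a 1 = 1
  hecke : ∀ m n : ℕ, 0 < m → 0 < n →
    a m * a n = ∑ d ∈ (Nat.gcd m n).divisors, (d : ℂ) ^ (k - 1) * a (m * n / d ^ 2)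

/-- The Hecke field of a space of cusp forms: the subfield of `ℂ` generated over `ℚ` by
all Fourier coefficients (= Hecke eigenvalues) of the normalized eigenforms. -/
noncomputable def HeckeField {d : ℕ} (a : Fin d → ℕ → ℂ) : IntermediateField ℚ ℂ :=
  IntermediateField.adjoin ℚ {x : ℂ | ∃ (i : Fin d) (n : ℕ), x = a i n}

private lemma hecke_indep {d : ℕ} (w : ℤ) (a : Fin d → ℕ → ℂ)
    (hnorm : ∀ i, a i 1 = 1)
    (hhecke : ∀ i m n, 0 < m → 0 < n →
      a i m * a i n = ∑ e ∈ (Nat.gcd m n).divisors, (e : ℂ) ^ (w - 1) * a i (m * n / e ^ 2))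
    (hdist : ∀ i j, i ≠ j → ∃ m, 0 < m ∧ a i m ≠ a j m) :
    ∀ (t : Fin d → ℂ), (∀ n, 0 < n → ∑ i, t i * a i n = 0) → t = 0 := by
  suffices H : ∀ s : Finset (Fin d), ∀ t : Fin d → ℂ,
      (∀ i, t i ≠ 0 → i ∈ s) → (∀ n, 0 < n → ∑ i, t i * a i n = 0) → t = 0 by
    intro t ht; exact H Finset.univ t (fun i _ => Finset.mem_univ i) ht
  intro s
  induction s using Finset.strongInduction with
  | _ s ih =>
    intro t hsupp hrel
    by_contra htne
    obtain ⟨j, hj⟩ : ∃ j, t j ≠ 0 := by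
      by_contra h; push_neg at h; exact htne (funext fun i => h i)
    by_cases hsingle : ∀ l, t l ≠ 0 → l = j
    · have h1 := hrel 1 one_pos
      rw [Finset.sum_eq_single j] at h1
      · rw [hnorm j, mul_one] at h1; exact hj h1
      · intro l _ hlj
        by_cases h : t l = 0
        · simp [h]
        · exact absurd (hsingle l h) hlj
      · simp
    · push_neg at hsingle
      obtain ⟨i, hti, hij⟩ := hsingle
      obtain ⟨m, hm, hma⟩ := hdist i j hij
      set t' : Fin d → ℂ := fun l => t l * (a l m - a j m) with ht'
      have hrel' : ∀ n, 0 < n → ∑ l, t' l * a l n = 0 := by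
        intro n hn
        have key : ∑ l, t l * (a l m * a l n) = 0 := by
          have e1 : ∀ l, t l * (a l m * a l n)
              = ∑ e ∈ (Nat.gcd m n).divisors, (e : ℂ) ^ (w - 1) * (t l * a l (m * n / e ^ 2)) := by
            intro l
            rw [hhecke l m n hm hn, Finset.mul_sum]
            refine Finset.sum_congr rfl fun e _ => by ring
          rw [Finset.sum_congr rfl fun l _ => e1 l, Finset.sum_comm]
          refine Finset.sum_eq_zero fun e he => ?_
          rw [← Finset.mul_sum]
          have hepos : 0 < e := Nat.pos_of_mem_divisors he
          have hdm : e ∣ m := (Nat.mem_divisors.mp he).1.trans (Nat.gcd_dvd_left m n)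
          have hdn : e ∣ n := (Nat.mem_divisors.mp he).1.trans (Nat.gcd_dvd_right m n)
          have hpos : 0 < m * n / e ^ 2 := by
            apply Nat.div_pos (Nat.le_of_dvd (by positivity) ?_) (by positivity)
            rw [pow_two]; exact mul_dvd_mul hdm hdn
          rw [hrel _ hpos, mul_zero]
        have e2 : ∀ l, t' l * a l n
            = t l * (a l m * a l n) - a j m * (t l * a l n) := by
          intro l; simp only [ht']; ring
        rw [Finset.sum_congr rfl fun l _ => e2 l, Finset.sum_sub_distrib, key,
          ← Finset.mul_sum, hrel n hn, mul_zero, sub_zero]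
      have hj_s : j ∈ s := hsupp j hj
      have ht'0 : t' = 0 := by
        refine ih (s.erase j) (Finset.erase_ssubset hj_s) t' (fun l hl => ?_) hrel'
        refine Finset.mem_erase.mpr ⟨?_, ?_⟩
        · rintro rfl
          simp only [ht', sub_self, mul_zero] at hl
          exact hl rfl
        · exact hsupp l fun h0 => hl (by simp [ht', h0])
      have : t' i = 0 := by rw [ht'0]; rfl
      simp only [ht', mul_eq_zero, sub_eq_zero] at this
      rcases this with h | h
      · exact hti h
      · exact hma h

private lemma eig_distinct {k' : ℤ} {d : ℕ} (g : Fin d → CuspForm (Gamma 1) k')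
    (ag : Fin d → ℕ → ℂ) (heig : ∀ i, IsNormalizedEigenform k' (g i) (ag i))
    (hli : LinearIndependent ℂ g) :
    ∀ i j, i ≠ j → ∃ m, 0 < m ∧ ag i m ≠ ag j m := by
  intro i j hij
  by_contra hcon; push_neg at hcon
  have hag : ∀ n : ℕ, n ≠ 0 → ag i n = ag j n := fun n hn => hcon n (Nat.pos_of_ne_zero hn)
  set δ : ℂ := ag i 0 - ag j 0 with hδ
  have hgij : g i ≠ g j := fun h => hij (hli.injective h)
  set G : CuspForm (Gamma 1) k' := g i - g j with hG
  have hGapp : ∀ z, G z = g i z - g j z := fun z => CuspForm.sub_apply _ _ _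
  have hval : ∀ z : ℍ, G z = 0 ∨ G z = δ := by
    intro z
    set u : ℕ → ℂ := fun n => ag i n * Complex.exp (2 * Real.pi * Complex.I * n * z) with hu
    set v : ℕ → ℂ := fun n => ag j n * Complex.exp (2 * Real.pi * Complex.I * n * z) with hv
    have hgi : g i z = ∑' n, u n := (heig i).fourier z
    have hgj : g j z = ∑' n, v n := (heig j).fourier z
    have hw : (fun n => u n - v n) = fun n => if n = 0 then δ else 0 := by
      funext n
      by_cases hn : n = 0
      · subst hn
        simp [hu, hv, hδ]
      · simp [hu, hv, hn, hag n hn]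
    have hsw : Summable (fun n => u n - v n) := by
      rw [hw]
      refine summable_of_ne_finset_zero (s := {0}) fun n hn => ?_
      simp only [Finset.mem_singleton] at hn
      simp [hn]
    have htw : ∑' n, (u n - v n) = δ := by
      rw [hw, tsum_eq_single 0 (fun n hn => by simp [hn])]
      simp
    by_cases hsv : Summable v
    · right
      have heq : u = fun n => v n + (u n - v n) := by funext n; ring
      rw [hGapp, hgi, hgj, heq, Summable.tsum_add hsv hsw, htw]
      ring
    · left
      have hsu : ¬ Summable u := fun hsu => hsv (by
        have heq : v = fun n => u n - (u n - v n) := by funext n; ring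
        rw [heq]; exact hsu.sub hsw)
      rw [hGapp, hgi, hgj, tsum_eq_zero_of_not_summable hsu,
        tsum_eq_zero_of_not_summable hsv, sub_zero]
  have hcont : Continuous ⇑G := G.holo'.continuous
  by_cases hδ0 : δ = 0
  · refine hgij (CuspForm.ext fun z => ?_)
    rcases hval z with h | h
    · have := hGapp z ▸ h; linear_combination this
    · have := hGapp z ▸ h; rw [hδ0] at this; linear_combination this
  · have hclopen : IsClopen {z : ℍ | G z = 0} := by
      refine ⟨?_, ?_⟩
      · exact isClosed_singleton.preimage hcont
      · rw [← isClosed_compl_iff]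
        have hcompl : {z : ℍ | G z = 0}ᶜ = ⇑G ⁻¹' {δ} := by
          ext z
          simp only [Set.mem_compl_iff, Set.mem_setOf_eq, Set.mem_preimage,
            Set.mem_singleton_iff]
          constructor
          · intro h; rcases hval z with h0 | h0
            · exact absurd h0 h
            · exact h0
          · intro h h0; rw [h0] at h; exact hδ0 h.symm
        rw [hcompl]; exact isClosed_singleton.preimage hcont
    rcases isClopen_iff.mp hclopen with hS | hS
    · -- S empty: G ≡ δ, contradict zero at infinity
      have hGδ : ∀ z, G z = δ := by
        intro z
        rcases hval z with h | h
        · exact absurd (by exact h : z ∈ {z : ℍ | G z = 0}) (by simp [hS])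
        · exact h
      have hzero : IsZeroAtImInfty ⇑G := CuspFormClass.zero_at_infty G
      rw [UpperHalfPlane.isZeroAtImInfty_iff] at hzero
      obtain ⟨A, hA⟩ := hzero (‖δ‖ / 2) (half_pos (norm_pos_iff.mpr hδ0))
      have hmem : (0 : ℝ) < (((max A 1 : ℝ) : ℂ) * Complex.I).im := by
        simp [lt_max_iff]
      set z₀ : ℍ := ⟨((max A 1 : ℝ) : ℂ) * Complex.I, hmem⟩ with hz₀
      have him : UpperHalfPlane.im z₀ = max A 1 := by
        simp [← UpperHalfPlane.coe_im, hz₀, UpperHalfPlane.coe]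
      have h1 := hA z₀ (by rw [him]; exact le_max_left A 1)
      rw [hGδ z₀] at h1
      have h2 : 0 < ‖δ‖ := norm_pos_iff.mpr hδ0
      linarith
    · refine hgij (CuspForm.ext fun z => ?_)
      have : G z = 0 := by
        have : z ∈ {z : ℍ | G z = 0} := by rw [hS]; trivial
        exact this
      have := hGapp z ▸ this; linear_combination this

/-- Let `f = f_{i₀}` be a normalized Hecke eigenform of weight `k` for `SL₂(ℤ)` and let
`g₁, …, g_{d₂}` be the normalized Hecke eigenbasis of `S_{2k}`, with all relevant Fourier
coefficients lying in the composite `F = F₁F₂` of the Hecke fields.  Suppose the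
stabilizer of `f²` in `Gal(F/ℚ)` acts transitively on `{g₁, …, g_{d₂}}` (each such Galois
element permuting the eigenforms via their `q`-expansions).  If `P` is the Petersson inner
product (conjugate-linear in its first argument, with the `g_i` pairwise orthogonal and
`P(g_i, g_i) ≠ 0`), then `⟨f², g_i⟩ ≠ 0` for every `i`. -/
theorem petersson_nonzero_of_transitive_stabilizer (k : ℤ) (d₁ d₂ : ℕ)
    (hd₁ : d₁ = Module.finrank ℂ (CuspForm (Gamma 1) k))
    (hd₂ : d₂ = Module.finrank ℂ (CuspForm (Gamma 1) (2 * k)))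
    (f : Fin d₁ → CuspForm (Gamma 1) k) (af : Fin d₁ → ℕ → ℂ)
    (g : Fin d₂ → CuspForm (Gamma 1) (2 * k)) (ag : Fin d₂ → ℕ → ℂ)
    (heigf : ∀ i, IsNormalizedEigenform k (f i) (af i))
    (heigg : ∀ i, IsNormalizedEigenform (2 * k) (g i) (ag i))
    (hlif : LinearIndependent ℂ f) (hspanf : Submodule.span ℂ (Set.range f) = ⊤)
    (hlig : LinearIndependent ℂ g) (hspang : Submodule.span ℂ (Set.range g) = ⊤)
    (i₀ : Fin d₁) (c : Fin d₂ → ℂ) (bsq : ℕ → ℂ)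
    (hexp : ∀ z : ℍ, (f i₀ z) ^ 2 =
      ∑' n : ℕ, bsq n * Complex.exp (2 * Real.pi * Complex.I * n * z))
    (hc : ∀ z : ℍ, (f i₀ z) ^ 2 = ∑ i : Fin d₂, c i * g i z)
    (hcoef : ∀ n : ℕ, bsq n = ∑ i : Fin d₂, c i * ag i n)
    (F : IntermediateField ℚ ℂ) (hF : F = HeckeField af ⊔ HeckeField ag)
    (hmem_b : ∀ n, bsq n ∈ F) (hmem_g : ∀ i n, ag i n ∈ F)
    (htrans : ∀ i j : Fin d₂, ∃ (σ : F ≃ₐ[ℚ] F) (π : Equiv.Perm (Fin d₂)),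
      (∀ n, (σ ⟨bsq n, hmem_b n⟩ : ℂ) = bsq n) ∧
      (∀ m n, (σ ⟨ag m n, hmem_g m n⟩ : ℂ) = ag (π m) n) ∧ π i = j)
    (P : (ℍ → ℂ) → (ℍ → ℂ) → ℂ)
    (hPadd : ∀ x y w : ℍ → ℂ, P (x + y) w = P x w + P y w)
    (hPsmul : ∀ (c : ℂ) (x w : ℍ → ℂ), P (c • x) w = starRingEnd ℂ c * P x w)
    (hPorth : ∀ i j, i ≠ j → P ⇑(g i) ⇑(g j) = 0)
    (hPnd : ∀ i, P ⇑(g i) ⇑(g i) ≠ 0) :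
    ∀ i, P ((⇑(f i₀)) ^ 2) ⇑(g i) ≠ 0 := by
  classical
  have hdist := eig_distinct g ag heigg hlig
  have hrelzero : ∀ (t : Fin d₂ → ℂ), (∀ n, 0 < n → ∑ m, t m * ag m n = 0) → t = 0 :=
    hecke_indep (2 * k) ag (fun m => (heigg m).normalized)
      (fun m a b ha hb => (heigg m).hecke a b ha hb) hdist
  -- Petersson linearity over finite sums
  have hPzero : ∀ w, P 0 w = 0 := by
    intro w
    have h := hPsmul 0 0 w
    simpa using h
  have hPsum : ∀ (s : Finset (Fin d₂)) (v : Fin d₂ → ℍ → ℂ) (w : ℍ → ℂ),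
      P (∑ j ∈ s, v j) w = ∑ j ∈ s, P (v j) w := by
    intro s v w
    induction s using Finset.induction with
    | empty => simpa using hPzero w
    | insert _ _ hns ih => rw [Finset.sum_insert hns, hPadd, ih, Finset.sum_insert hns]
  have hfg : (⇑(f i₀)) ^ 2 = ∑ j : Fin d₂, c j • ⇑(g j) := by
    funext z
    have h := hc z
    simpa [Finset.sum_apply] using h
  have hPval : ∀ i, P ((⇑(f i₀)) ^ 2) ⇑(g i) = (starRingEnd ℂ) (c i) * P ⇑(g i) ⇑(g i) := by
    intro i
    rw [hfg, hPsum]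
    rw [Finset.sum_eq_single i]
    · rw [hPsmul]
    · intro j _ hji
      rw [hPsmul, hPorth j i hji, mul_zero]
    · simp
  -- rationality of the coefficients c over F
  set A : Fin d₂ → ℕ → F := fun m n => ⟨ag m n, hmem_g m n⟩ with hA
  set bF : ℕ → F := fun n => ⟨bsq n, hmem_b n⟩ with hbF
  let B := Module.Basis.ofVectorSpace F ℂ
  obtain ⟨α₀, hα₀⟩ : ∃ α, B.repr 1 α ≠ 0 := by
    by_contra h
    push_neg at h
    have h1 : B.repr (1 : ℂ) = 0 := Finsupp.ext h
    have h2 : (1 : ℂ) = 0 := by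
      have := congrArg B.repr.symm h1
      simpa using this
    exact one_ne_zero h2
  set e : F := B.repr 1 α₀ with he
  have hrep : ∀ n, bF n * e = ∑ m, A m n * B.repr (c m) α₀ := by
    intro n
    have h1 : (bsq n : ℂ) = ∑ m, (A m n) • (c m) := by
      rw [hcoef n]
      exact Finset.sum_congr rfl fun m _ => mul_comm (c m) (ag m n)
    have h2 : ((bF n) • (1 : ℂ)) = bsq n := mul_one (bsq n)
    have h3 : (bF n) • B.repr (1 : ℂ) = ∑ m, (A m n) • B.repr (c m) := by
      calc (bF n) • B.repr (1 : ℂ) = B.repr ((bF n) • (1 : ℂ)) := (map_smul _ _ _).symm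
        _ = B.repr (∑ m, (A m n) • (c m)) := by rw [h2, h1]
        _ = ∑ m, (A m n) • B.repr (c m) := by
            rw [map_sum]
            exact Finset.sum_congr rfl fun m _ => map_smul _ _ _
    have h4 := congrArg (fun φ => φ α₀) h3
    simpa [Finsupp.smul_apply, smul_eq_mul, Finsupp.finset_sum_apply] using h4
  set cF : Fin d₂ → F := fun m => B.repr (c m) α₀ * e⁻¹ with hcF
  have hFid : ∀ n, ∑ m, cF m * A m n = bF n := by
    intro n
    calc ∑ m, cF m * A m n = (∑ m, A m n * B.repr (c m) α₀) * e⁻¹ := by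
          rw [Finset.sum_mul]
          refine Finset.sum_congr rfl fun m _ => ?_
          simp only [hcF]; ring
      _ = bF n := by rw [← hrep n, mul_assoc, mul_inv_cancel₀ hα₀, mul_one]
  have hcoeF : ∀ n, ∑ m, (cF m : ℂ) * ag m n = bsq n := by
    intro n
    have h5 := congrArg (fun x : F => (x : ℂ)) (hFid n)
    push_cast at h5
    simpa using h5
  have hceq : ∀ m, (cF m : ℂ) = c m := by
    have h0 := hrelzero (fun m => (cF m : ℂ) - c m) ?_
    · intro m
      have := congrFun h0 m
      simpa [sub_eq_zero] using this
    · intro n _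
      have hsplit : ∑ m, ((cF m : ℂ) - c m) * ag m n
          = (∑ m, (cF m : ℂ) * ag m n) - ∑ m, c m * ag m n := by
        rw [← Finset.sum_sub_distrib]
        exact Finset.sum_congr rfl fun m _ => by ring
      rw [hsplit, hcoeF n, ← hcoef n, sub_self]
  -- main argument
  intro i hPi
  have hci : c i = 0 := by
    rcases mul_eq_zero.mp ((hPval i) ▸ hPi) with h | h
    · simpa using h
    · exact absurd h (hPnd i)
  have hall : ∀ j, c j = 0 := by
    intro j
    obtain ⟨σ, π, hσb, hσg, hπ⟩ := htrans j i
    have hσF : ∀ n, ∑ m, σ (cF m) * σ (A m n) = σ (bF n) := by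
      intro n
      have hmm : ∀ m : Fin d₂, σ (cF m) * σ (A m n) = σ (cF m * A m n) :=
        fun m => (map_mul σ _ _).symm
      rw [Finset.sum_congr rfl fun m _ => hmm m, ← map_sum, hFid n]
    have hAg : ∀ m n, ((σ (A m n) : ℂ)) = ag (π m) n := fun m n => hσg m n
    have hbg : ∀ n, ((σ (bF n) : ℂ)) = bsq n := fun n => hσb n
    have hC : ∀ n, 0 < n → ∑ m, ((σ (cF m) : ℂ)) * ag (π m) n = bsq n := by
      intro n _
      have h6 := congrArg (fun x : F => (x : ℂ)) (hσF n)
      push_cast at h6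
      calc ∑ m, ((σ (cF m) : ℂ)) * ag (π m) n
          = ∑ m, ((σ (cF m) : ℂ)) * ((σ (A m n) : ℂ)) := by
            exact Finset.sum_congr rfl fun m _ => by rw [hAg m n]
        _ = ((σ (bF n) : ℂ)) := h6
        _ = bsq n := hbg n
    have hC2 : ∀ n, 0 < n → ∑ m, ((σ (cF (π.symm m)) : ℂ)) * ag m n = bsq n := by
      intro n hn
      rw [← hC n hn, ← Equiv.sum_comp π fun m => ((σ (cF (π.symm m)) : ℂ)) * ag m n]
      exact Finset.sum_congr rfl fun m _ => by rw [Equiv.symm_apply_apply]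
    have ht0 := hrelzero (fun m => ((σ (cF (π.symm m)) : ℂ)) - c m) ?_
    · have hti := congrFun ht0 i
      simp only [Pi.zero_apply, sub_eq_zero] at hti
      have hsymm : π.symm i = j := by
        rw [Equiv.symm_apply_eq, hπ]
      rw [hsymm, hci] at hti
      have hz : σ (cF j) = 0 := by exact_mod_cast hti
      have hz2 : cF j = 0 := by
        apply σ.injective
        rw [hz, map_zero]
      rw [← hceq j, hz2]
      simp
    · intro n hn
      have hsplit : ∑ m, (((σ (cF (π.symm m)) : ℂ)) - c m) * ag m n
          = (∑ m, ((σ (cF (π.symm m)) : ℂ)) * ag m n) - ∑ m, c m * ag m n := by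
        rw [← Finset.sum_sub_distrib]
        exact Finset.sum_congr rfl fun m _ => by ring
      rw [hsplit, hC2 n hn, ← hcoef n, sub_self]
  have hf0 : f i₀ = 0 := by
    refine CuspForm.ext fun z => ?_
    have h := hc z
    simp only [hall, zero_mul, Finset.sum_const_zero] at h
    have := pow_eq_zero_iff (n := 2) (by norm_num) |>.mp h
    simpa using this
  exact hlif.ne_zero i₀ hf0
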